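/- Let T be a finite tree (a connected acyclic simple graph) with n ≥ 2 vertices in which every vertex has degree at most 3. Then there exists an edge {u, v} of T such that deleting this edge leaves two connected components each containing at least (n − 1)/3 vertices; precisely, there exist adjacent vertices u and v such that the connected component of u and the connected component of v in T with the edge {u,v} removed each have at least (n − 1)/3 vertices (equivalently, 3 times each component's size is at least n − 1). -/

import Mathlib

open SimpleGraph

section Aux
variable {V : Type*} [Fintype V] [DecidableEq V]

/-- The component of `a` after deleting the edge `s(a, b)`. -/
def tbecA (G : SimpleGraph V) (a b : V) : Set V :=
  {w : V | (G.deleteEdges {s(a, b)}).Reachable a w}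

variable {G : SimpleGraph V}

lemma tbec_cover (hc : G.Connected) {u v : V} (huv : G.Adj u v) (w : V) :
    (G.deleteEdges {s(u, v)}).Reachable u w ∨ (G.deleteEdges {s(u, v)}).Reachable v w := by
  obtain ⟨p⟩ := hc u w
  induction p using SimpleGraph.Walk.concatRec with
  | Hnil => exact Or.inl (Reachable.refl _)
  | Hconcat q h ih =>
    rename_i a x y
    by_cases he : s(x, y) = s(a, v)
    · rw [Sym2.eq_iff] at he
      rcases he with ⟨rfl, rfl⟩ | ⟨rfl, rfl⟩
      · exact Or.inr (Reachable.refl _)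
      · exact Or.inl (Reachable.refl _)
    · have hadj : (G.deleteEdges {s(a, v)}).Adj x y := by simp [h, he]
      rcases ih huv with h1 | h1
      · exact Or.inl (h1.trans hadj.reachable)
      · exact Or.inr (h1.trans hadj.reachable)

lemma tbec_bridge (hT : G.IsTree) {u v : V} (huv : G.Adj u v) :
    ¬ (G.deleteEdges {s(u, v)}).Reachable u v := by
  have hb := (isAcyclic_iff_forall_adj_isBridge.mp hT.2) huv
  exact isBridge_iff.mp hb

lemma tbec_compl (hT : G.IsTree) {u v : V} (huv : G.Adj u v) :
    {w : V | (G.deleteEdges {s(u, v)}).Reachable v w} =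
      (tbecA G u v)ᶜ := by
  ext w
  simp only [Set.mem_compl_iff, Set.mem_setOf_eq, tbecA]
  constructor
  · intro hv hu
    exact tbec_bridge hT huv (hu.trans hv.symm)
  · intro hu
    rcases tbec_cover hT.1 huv w with h | h
    · exact absurd h hu
    · exact h

lemma tbec_vu (huv : G.Adj u v) :
    tbecA G v u = {w : V | (G.deleteEdges {s(u, v)}).Reachable v w} := by
  unfold tbecA
  rw [Sym2.eq_swap]

lemma tbec_card (hT : G.IsTree) {u v : V} (huv : G.Adj u v) :
    (tbecA G u v).ncard + (tbecA G v u).ncard = Fintype.card V := by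
  rw [tbec_vu huv, tbec_compl hT huv, Set.ncard_add_ncard_compl, Nat.card_eq_fintype_card]

lemma tbec_subtree (hT : G.IsTree) {u v x : V} (huv : G.Adj u v) (hvx : G.Adj v x)
    (hxu : x ≠ u) :
    tbecA G x v ⊆ tbecA G v u \ {v} := by
  rw [tbec_vu huv]
  intro a ha
  simp only [tbecA, Set.mem_setOf_eq] at ha
  have hav : a ≠ v := by
    rintro rfl
    exact tbec_bridge hT hvx.symm ha
  obtain ⟨p0⟩ := ha
  obtain ⟨p, hp⟩ := p0.toPath
  have hpe : ∀ e ∈ p.edges, e ∈ G.edgeSet := by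
    intro e he
    have h1 := p.edges_subset_edgeSet he
    rw [edgeSet_deleteEdges] at h1
    exact h1.1
  have hxvp : s(x, v) ∉ p.edges := by
    intro h
    have h1 := p.edges_subset_edgeSet h
    rw [edgeSet_deleteEdges] at h1
    exact h1.2 rfl
  set q := p.transfer G hpe with hq
  have hq_path : q.IsPath := hp.transfer hpe
  have hvsup : v ∉ q.support := by
    intro hv
    have h1 : (q.takeUntil v hv).IsPath := hq_path.takeUntil hv
    have h2 : (Walk.cons hvx.symm Walk.nil).IsPath := by
      simp [Walk.cons_isPath_iff, hvx.ne']
    have h3 := (hT.existsUnique_path x v).unique h1 h2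
    have h4 : s(x, v) ∈ (q.takeUntil v hv).edges := by rw [h3]; simp
    have h5 := Walk.edges_takeUntil_subset q hv h4
    rw [Walk.edges_transfer] at h5
    exact hxvp h5
  have hqe : ∀ e ∈ q.edges, e ∉ ({s(u, v)} : Set (Sym2 V)) := by
    intro e he hmem
    rw [Set.mem_singleton_iff] at hmem
    subst hmem
    exact hvsup (Walk.snd_mem_support_of_mem_edges q he)
  have hvx' : (G.deleteEdges {s(u, v)}).Adj v x := by
    simp only [deleteEdges_adj, Set.mem_singleton_iff]
    refine ⟨hvx, fun h => ?_⟩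
    rw [Sym2.eq_iff] at h
    rcases h with ⟨h1, h2⟩ | ⟨h1, h2⟩
    · exact huv.ne h1.symm
    · exact hxu h2
  exact ⟨hvx'.reachable.trans ⟨q.toDeleteEdges {s(u, v)} hqe⟩, hav⟩

lemma tbec_split {u v w : V} (huv : G.Adj u v)
    (hw : (G.deleteEdges {s(u, v)}).Reachable v w) (hwv : w ≠ v) :
    ∃ x, G.Adj v x ∧ x ≠ u ∧ w ∈ tbecA G x v := by
  obtain ⟨p0⟩ := hw
  obtain ⟨p, hp⟩ := p0.toPath
  cases p with
  | nil => exact absurd rfl hwv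
  | cons hadj q =>
    rename_i x
    rw [Walk.cons_isPath_iff] at hp
    rw [deleteEdges_adj, Set.mem_singleton_iff] at hadj
    have hxu : x ≠ u := by
      rintro rfl
      exact hadj.2 (Sym2.eq_swap)
    refine ⟨x, hadj.1, hxu, ?_⟩
    have hqe : ∀ e ∈ q.edges, e ∈ G.edgeSet := by
      intro e he
      have h1 := q.edges_subset_edgeSet he
      rw [edgeSet_deleteEdges] at h1
      exact h1.1
    set q' := q.transfer G hqe with hq'
    have hvsup : v ∉ q'.support := by
      rw [Walk.support_transfer]
      exact hp.2
    have hq'e : ∀ e ∈ q'.edges, e ∉ ({s(x, v)} : Set (Sym2 V)) := by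
      intro e he hmem
      rw [Set.mem_singleton_iff] at hmem
      subst hmem
      exact hvsup (Walk.snd_mem_support_of_mem_edges q' he)
    exact ⟨q'.toDeleteEdges {s(x, v)} hq'e⟩

lemma tbec_biUnion_le {α β : Type*} (F : Finset α) (f : α → Set β) :
    (⋃ x ∈ F, f x).ncard ≤ ∑ x ∈ F, (f x).ncard := by
  classical
  induction F using Finset.induction with
  | empty => simp
  | insert a F h ih =>
    rw [Finset.sum_insert h, Finset.set_biUnion_insert]
    exact le_trans (Set.ncard_union_le _ _) (add_le_add_right ih _)

end Aux

/-- In a finite tree with `n ≥ 2` vertices and maximum degree at most 3, there is an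
edge whose removal leaves two components (the one containing each endpoint) each of
size at least `(n - 1) / 3`, i.e. 3 times each component's size is at least `n - 1`. -/
theorem tree_balanced_edge_cut {V : Type*} [Fintype V] [DecidableEq V]
    (G : SimpleGraph V) [DecidableRel G.Adj]
    (hT : G.IsTree) (hn : 2 ≤ Fintype.card V)
    (hdeg : ∀ v : V, G.degree v ≤ 3) :
    ∃ u v : V, G.Adj u v ∧
      Fintype.card V - 1 ≤
        3 * {w : V | (G.deleteEdges {s(u, v)}).Reachable u w}.ncard ∧
      Fintype.card V - 1 ≤
        3 * {w : V | (G.deleteEdges {s(u, v)}).Reachable v w}.ncard := by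
  classical
  -- there is an adjacent pair
  have hadj_ex : ∃ a b : V, G.Adj a b := by
    have hne : Nonempty V := Fintype.card_pos_iff.mp (by omega)
    obtain ⟨a⟩ := hne
    obtain ⟨b, hb⟩ := Fintype.exists_ne_of_one_lt_card (by omega) a
    obtain ⟨p⟩ := hT.1 b a
    cases p with
    | nil => exact absurd rfl hb
    | cons hadj q => exact ⟨b, _, hadj⟩
  set n := Fintype.card V with hn_def
  let S : Set (V × V) :=
    {p : V × V | G.Adj p.1 p.2 ∧ (tbecA G p.1 p.2).ncard ≤ (tbecA G p.2 p.1).ncard}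
  have hS : S.Nonempty := by
    obtain ⟨a, b, hab⟩ := hadj_ex
    rcases le_total ((tbecA G a b).ncard) ((tbecA G b a).ncard) with h | h
    · exact ⟨(a, b), hab, h⟩
    · exact ⟨(b, a), hab.symm, h⟩
  obtain ⟨⟨u, v⟩, hpS, hmax⟩ :=
    S.exists_max_image (fun p => (tbecA G p.1 p.2).ncard) (Set.toFinite S) hS
  obtain ⟨huv, hs_le⟩ := hpS
  simp only at huv hs_le hmax
  set s := (tbecA G u v).ncard with hs_def
  have hsum : ∀ a b : V, G.Adj a b → (tbecA G a b).ncard + (tbecA G b a).ncard = n :=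
    fun a b hab => tbec_card hT hab
  have e1 : s + (tbecA G v u).ncard = n := hsum u v huv
  -- key inequality
  have hkey : n - 1 ≤ 3 * s := by
    by_contra hlt
    push_neg at hlt
    -- each other subtree at v has size at most s
    have hsub : ∀ x : V, G.Adj v x → x ≠ u → (tbecA G x v).ncard ≤ s := by
      intro x hvx hxu
      have hsubset := tbec_subtree hT huv hvx hxu
      have hvmem : v ∈ tbecA G v u := Reachable.refl _
      have hpos : 0 < (tbecA G v u).ncard :=
        (Set.ncard_pos (Set.toFinite _)).mpr ⟨v, hvmem⟩
      have hle1 : (tbecA G x v).ncard ≤ (tbecA G v u).ncard - 1 := by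
        calc (tbecA G x v).ncard ≤ (tbecA G v u \ {v}).ncard :=
              Set.ncard_le_ncard hsubset (Set.toFinite _)
          _ = (tbecA G v u).ncard - 1 := Set.ncard_diff_singleton_of_mem hvmem
      by_cases hc : (tbecA G x v).ncard ≤ (tbecA G v x).ncard
      · exact hmax (x, v) ⟨hvx.symm, hc⟩
      · push_neg at hc
        have h2 : (tbecA G v x).ncard ≤ s := hmax (v, x) ⟨hvx, hc.le⟩
        have e2 : (tbecA G x v).ncard + (tbecA G v x).ncard = n := hsum x v hvx.symm
        omega
    -- cover the big side by v and its other subtrees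
    set F : Finset V := (G.neighborFinset v).erase u with hF_def
    have hFcard : F.card ≤ 2 := by
      have hu_mem : u ∈ G.neighborFinset v := by
        rw [mem_neighborFinset]; exact huv.symm
      have hd := hdeg v
      rw [← card_neighborFinset_eq_degree] at hd
      rw [hF_def, Finset.card_erase_of_mem hu_mem]
      omega
    have hcoverB : tbecA G v u ⊆ insert v (⋃ x ∈ F, tbecA G x v) := by
      intro w hw
      by_cases hwv : w = v
      · exact hwv ▸ Set.mem_insert _ _
      · have hw' : (G.deleteEdges {s(u, v)}).Reachable v w := by
          have := hw
          rw [tbec_vu huv] at this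
          exact this
        obtain ⟨x, hvx, hxu, hr⟩ := tbec_split huv hw' hwv
        refine Set.mem_insert_of_mem _ ?_
        have hxF : x ∈ F := by
          rw [hF_def, Finset.mem_erase, mem_neighborFinset]
          exact ⟨hxu, hvx⟩
        exact Set.mem_iUnion₂.mpr ⟨x, hxF, hr⟩
    have hB : (tbecA G v u).ncard ≤ 1 + 2 * s := by
      calc (tbecA G v u).ncard ≤ (insert v (⋃ x ∈ F, tbecA G x v)).ncard :=
            Set.ncard_le_ncard hcoverB (Set.toFinite _)
        _ ≤ (⋃ x ∈ F, tbecA G x v).ncard + 1 := Set.ncard_insert_le _ _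
        _ ≤ (∑ x ∈ F, (tbecA G x v).ncard) + 1 :=
            add_le_add_left (tbec_biUnion_le F _) 1
        _ ≤ F.card * s + 1 := by
            refine add_le_add_left ?_ 1
            have h := Finset.sum_le_card_nsmul F (fun x => (tbecA G x v).ncard) s ?_
            · simpa using h
            · intro x hx
              rw [hF_def, Finset.mem_erase, mem_neighborFinset] at hx
              exact hsub x hx.2 hx.1
        _ ≤ 1 + 2 * s := by nlinarith [hFcard]
    omega
  have hkey2 : n - 1 ≤ 3 * (tbecA G v u).ncard :=
    le_trans hkey (by omega)
  refine ⟨u, v, huv, hkey, ?_⟩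
  have := hkey2
  rw [tbec_vu huv] at this
  exact this
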